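/- Let n ≥ 1 and α ∈ ℝ. The matrix -J̃_n(α) is dissipative (i.e. ⟨J̃_n(α)a, a⟩ ≥ 0 for all a ∈ ℝⁿ with the Euclidean inner product) if and only if α ≥ cos(π/(2n+1)). -/

import Mathlib

open Real Matrix

/-- The `n × n` upper bidiagonal matrix with diagonal entries `x`, except that the
`(n,n)` entry is `x - 1/2`, and `1` on the superdiagonal. -/
noncomputable def jordanBlockMod (n : ℕ) (x : ℝ) : Matrix (Fin n) (Fin n) ℝ :=
  Matrix.of fun i j =>
    if (j : ℕ) = (i : ℕ) then (if (i : ℕ) = n - 1 then x - 1 / 2 else x)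
    else if (j : ℕ) = (i : ℕ) + 1 then 1 else 0

open Finset in
private lemma sin_rec' (θ : ℝ) (j : ℕ) :
    Real.sin ((j+2) * θ) + Real.sin (j * θ) = 2 * Real.cos θ * Real.sin ((j+1) * θ) := by
  have h : ((j:ℝ)+2) * θ = ((j:ℝ)+1) * θ + θ := by ring
  have h2 : (j:ℝ) * θ = ((j:ℝ)+1) * θ - θ := by ring
  rw [h, h2, Real.sin_add, Real.sin_sub]; ring

private lemma key_step' (c s1 s2 s3 x y : ℝ) (h1 : s1 ≠ 0) (h2 : s2 ≠ 0)
    (hrec : s3 + s1 = 2*c*s2) :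
    c*y^2 + x*y + s2/(2*s1)*x^2 = (s2*x + s1*y)^2/(2*s1*s2) + s3/(2*s2)*y^2 := by
  have hs3 : s3 = 2*c*s2 - s1 := by linarith
  rw [hs3]; field_simp; ring

open Finset in
private lemma sos_identity' (θ : ℝ) (n : ℕ)
    (hpos : ∀ j : ℕ, 1 ≤ j → j ≤ n → 0 < Real.sin (j * θ)) (b : ℕ → ℝ) :
    ∀ m : ℕ, m + 1 ≤ n →
      Real.cos θ * ∑ j ∈ range (m+1), (b j)^2 + ∑ j ∈ range m, b j * b (j+1)
      = (∑ j ∈ range m, (Real.sin ((j+2)*θ) * b j + Real.sin ((j+1)*θ) * b (j+1))^2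
          / (2 * Real.sin ((j+1)*θ) * Real.sin ((j+2)*θ)))
        + Real.sin ((m+2)*θ) / (2 * Real.sin ((m+1)*θ)) * (b m)^2 := by
  intro m
  induction m with
  | zero =>
    intro h1
    have hs1 : 0 < Real.sin ((1:ℕ) * θ) := hpos 1 le_rfl h1
    have hrec := sin_rec' θ 0
    simp only [range_one, range_zero, sum_empty, sum_singleton] at *
    push_cast at hrec hs1 ⊢
    norm_num at hrec hs1 ⊢
    have hne : Real.sin θ ≠ 0 := ne_of_gt hs1
    rw [hrec]
    field_simp
    left; trivial
  | succ m ih =>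
    intro h
    have h1 : m + 1 ≤ n := by omega
    have hs1 : 0 < Real.sin ((m+1:ℕ) * θ) := hpos (m+1) (by omega) (by omega)
    have hs2 : 0 < Real.sin ((m+2:ℕ) * θ) := hpos (m+2) (by omega) h
    have hrec := sin_rec' θ (m+1)
    have IH := ih h1
    rw [sum_range_succ (fun j => (b j)^2), sum_range_succ (fun j => b j * b (j+1)),
        sum_range_succ (fun j => (Real.sin ((j+2)*θ) * b j + Real.sin ((j+1)*θ) * b (j+1))^2
          / (2 * Real.sin ((j+1)*θ) * Real.sin ((j+2)*θ)))]
    push_cast at hrec hs1 hs2 IH ⊢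
    have key := key_step' (Real.cos θ) (Real.sin (((m:ℝ)+1)*θ)) (Real.sin (((m:ℝ)+2)*θ))
      (Real.sin (((m:ℝ)+3)*θ)) (b m) (b (m+1)) (ne_of_gt hs1) (ne_of_gt hs2)
      (by rw [show ((m:ℝ)+3) = ((m:ℝ)+1)+2 by ring, show ((m:ℝ)+2) = ((m:ℝ)+1)+1 by ring]
          exact hrec)
    rw [show ((m:ℝ)+1+2) = ((m:ℝ)+3) by ring, show ((m:ℝ)+1+1) = ((m:ℝ)+2) by ring]
    linear_combination IH + key

open Finset in
private lemma mulVec_eq' (n : ℕ) (α : ℝ) (a : Fin n → ℝ) (i : Fin n) :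
    (jordanBlockMod n α).mulVec a i =
      (if (i:ℕ) = n - 1 then α - 1/2 else α) * a i
      + (if h : (i:ℕ)+1 < n then a ⟨(i:ℕ)+1, h⟩ else 0) := by
  set d : Fin n → ℝ := fun i => if (i:ℕ) = n - 1 then α - 1/2 else α with hd
  have hsummand : ∀ j : Fin n, jordanBlockMod n α i j * a j =
      (if j = i then d i * a i else 0) + (if (j:ℕ) = (i:ℕ)+1 then a j else 0) := by
    intro j
    simp only [jordanBlockMod, Matrix.of_apply, hd]
    by_cases h1 : (j:ℕ) = (i:ℕ)
    · have : j = i := Fin.ext h1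
      subst this
      simp [h1]
    · have : ¬ (j = i) := fun h => h1 (by rw [h])
      by_cases h2 : (j:ℕ) = (i:ℕ)+1 <;> simp [h1, h2, this]
  rw [Matrix.mulVec, dotProduct]
  rw [Finset.sum_congr rfl (fun j _ => hsummand j), Finset.sum_add_distrib,
    Finset.sum_ite_eq' univ i]
  simp only [mem_univ, if_true]
  congr 1
  by_cases h : (i:ℕ)+1 < n
  · have hiff : ∀ j : Fin n, ((j:ℕ) = (i:ℕ)+1) ↔ j = ⟨(i:ℕ)+1, h⟩ := by
      intro j; simp [Fin.ext_iff]
    rw [Finset.sum_congr rfl (fun j _ => by rw [if_congr (hiff j) rfl rfl]), dif_pos h]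
    simp [Finset.sum_ite_eq' univ ((⟨(i:ℕ)+1, h⟩ : Fin n)) a]
  · rw [dif_neg h]
    apply Finset.sum_eq_zero
    intro j _
    rw [if_neg]
    exact fun hj => h (hj ▸ j.isLt)

open Finset in
private lemma quad_form' (n : ℕ) (hn : 1 ≤ n) (α : ℝ) (a : Fin n → ℝ) (b : ℕ → ℝ)
    (hb : ∀ k : ℕ, b k = if h : k < n then a ⟨k, h⟩ else 0) :
    (jordanBlockMod n α).mulVec a ⬝ᵥ a =
      α * ∑ k ∈ range n, (b k)^2 + ∑ k ∈ range (n-1), b k * b (k+1)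
        - (1/2) * (b (n-1))^2 := by
  have hba : ∀ i : Fin n, b (i:ℕ) = a i := by
    intro i; rw [hb]; simp [i.isLt]
  rw [dotProduct]
  rw [Finset.sum_congr rfl (fun i _ => by rw [mulVec_eq' n α a i])]
  have split : ∀ i : Fin n,
      ((if (i:ℕ) = n - 1 then α - 1/2 else α) * a i
        + (if h : (i:ℕ)+1 < n then a ⟨(i:ℕ)+1, h⟩ else 0)) * a i
      = (α * (b (i:ℕ))^2 - (if (i:ℕ) = n-1 then (1/2) * (b (i:ℕ))^2 else 0))
        + (if h : (i:ℕ)+1 < n then b ((i:ℕ)+1) else 0) * b (i:ℕ) := by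
    intro i
    rw [hba i]
    by_cases h : (i:ℕ)+1 < n
    · rw [dif_pos h, dif_pos h, hb ((i:ℕ)+1), dif_pos h]
      by_cases h2 : (i:ℕ) = n-1 <;> simp [h2] <;> ring
    · rw [dif_neg h, dif_neg h]
      by_cases h2 : (i:ℕ) = n-1 <;> simp [h2] <;> ring
  rw [Finset.sum_congr rfl (fun i _ => split i), Finset.sum_add_distrib,
    Finset.sum_sub_distrib]
  rw [Fin.sum_univ_eq_sum_range (fun k => α * (b k)^2) n,
    Fin.sum_univ_eq_sum_range (fun k => if k = n-1 then (1/2) * (b k)^2 else 0) n,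
    Fin.sum_univ_eq_sum_range (fun k => (if h : k+1 < n then b (k+1) else 0) * b k) n]
  rw [Finset.sum_ite_eq' (range n) (n-1) (fun k => (1/2) * (b k)^2)]
  rw [if_pos (by simp; omega : n-1 ∈ range n)]
  rw [← Finset.mul_sum]
  have hlast : ∑ k ∈ range n, (if h : k+1 < n then b (k+1) else 0) * b k
      = ∑ k ∈ range (n-1), b k * b (k+1) := by
    obtain ⟨m, rfl⟩ : ∃ m, n = m + 1 := ⟨n-1, by omega⟩
    rw [Finset.sum_range_succ]
    simp only [Nat.add_sub_cancel]
    rw [dif_neg (by omega), zero_mul, add_zero]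
    apply Finset.sum_congr rfl
    intro k hk
    simp only [mem_range] at hk
    rw [dif_pos (by omega)]
    ring
  rw [hlast]
  ring

open Finset in
/-- `-J̃_n(α)` is dissipative iff `α ≥ cos(π/(2n+1))`. -/
theorem neg_jordanBlockMod_dissipative_iff (n : ℕ) (hn : 1 ≤ n) (α : ℝ) :
    (∀ a : Fin n → ℝ, (jordanBlockMod n α).mulVec a ⬝ᵥ a ≥ 0) ↔
      α ≥ Real.cos (π / (2 * n + 1)) := by
  obtain ⟨m, rfl⟩ : ∃ m, n = m + 1 := ⟨n-1, by omega⟩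
  set θ : ℝ := π / (2 * (m+1:ℕ) + 1) with hθ
  have hden : (0:ℝ) < 2 * (m+1:ℕ) + 1 := by positivity
  have hθpos : 0 < θ := by rw [hθ]; positivity
  have hpos : ∀ j : ℕ, 1 ≤ j → j ≤ m+1 → 0 < Real.sin (j * θ) := by
    intro j h1 h2
    apply Real.sin_pos_of_pos_of_lt_pi
    · have : (1:ℝ) ≤ (j:ℝ) := by exact_mod_cast h1
      nlinarith
    · rw [hθ, mul_div_assoc']
      rw [div_lt_iff₀ hden]
      have : (j:ℝ) ≤ (m+1:ℕ) := by exact_mod_cast h2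
      nlinarith [Real.pi_pos]
  have hsym : Real.sin (((m+2:ℕ)) * θ) = Real.sin (((m+1:ℕ)) * θ) := by
    have h2 : ((m+2:ℕ):ℝ) * θ = π - ((m+1:ℕ):ℝ) * θ := by
      rw [hθ]; push_cast; field_simp; ring
    rw [h2, Real.sin_pi_sub]
  have hs1 : 0 < Real.sin (((m+1:ℕ)) * θ) := hpos (m+1) (by omega) (by omega)
  have htail : Real.sin (((m+2:ℕ)) * θ) / (2 * Real.sin (((m+1:ℕ)) * θ)) = 1/2 := by
    rw [hsym]
    rw [div_eq_iff (by positivity)]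
    ring
  push_cast at htail hsym hs1
  constructor
  · -- forward direction
    intro h
    set a : Fin (m+1) → ℝ := fun i => (-1)^(i:ℕ) * Real.sin (((i:ℕ)+1) * θ) with ha
    set b : ℕ → ℝ := fun k => if hk : k < m+1 then a ⟨k, hk⟩ else 0 with hbdef
    have hb : ∀ k : ℕ, b k = if hk : k < m+1 then a ⟨k, hk⟩ else 0 := fun k => rfl
    have hbk : ∀ k : ℕ, k < m+1 → b k = (-1)^k * Real.sin (((k:ℝ)+1) * θ) := by
      intro k hk
      rw [hb k, dif_pos hk, ha]
    have hQ := quad_form' (m+1) (by omega) α a b hb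
    have hsos := sos_identity' θ (m+1) hpos b m (le_refl (m+1))
    have hzero : (∑ j ∈ range m, (Real.sin ((j+2)*θ) * b j + Real.sin ((j+1)*θ) * b (j+1))^2
          / (2 * Real.sin ((j+1)*θ) * Real.sin ((j+2)*θ))) = 0 := by
      apply Finset.sum_eq_zero
      intro j hj
      simp only [mem_range] at hj
      have e1 := hbk j (by omega)
      have e2 := hbk (j+1) (by omega)
      push_cast at e2
      rw [e1, e2]
      have : Real.sin ((j+2)*θ) * ((-1)^j * Real.sin (((j:ℝ)+1) * θ))
          + Real.sin ((j+1)*θ) * ((-1)^(j+1) * Real.sin (((j:ℝ)+1+1) * θ)) = 0 := by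
        push_cast
        rw [pow_succ]
        ring_nf
      rw [this]
      simp
    rw [hzero, htail, zero_add] at hsos
    have hQa := h a
    rw [hQ] at hQa
    simp only [Nat.add_sub_cancel] at hQa
    have hSb : Real.sin θ ^ 2 ≤ ∑ k ∈ range (m+1), (b k)^2 := by
      have h0 : (b 0)^2 = Real.sin θ ^ 2 := by
        rw [hbk 0 (by omega)]
        push_cast
        norm_num
      rw [← h0]
      exact Finset.single_le_sum (fun i _ => sq_nonneg (b i)) (by simp)
    have hsθ : 0 < Real.sin θ := by
      have := hpos 1 le_rfl (by omega)
      simpa using this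
    have hkey : 0 ≤ (α - Real.cos θ) * ∑ k ∈ range (m+1), (b k)^2 := by nlinarith
    have hSbpos : 0 < ∑ k ∈ range (m+1), (b k)^2 := by nlinarith
    rw [ge_iff_le]
    nlinarith
  · -- backward direction
    intro hα a
    set b : ℕ → ℝ := fun k => if hk : k < m+1 then a ⟨k, hk⟩ else 0 with hbdef
    have hb : ∀ k : ℕ, b k = if hk : k < m+1 then a ⟨k, hk⟩ else 0 := fun k => rfl
    have hQ := quad_form' (m+1) (by omega) α a b hb
    have hsos := sos_identity' θ (m+1) hpos b m (le_refl (m+1))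
    rw [htail] at hsos
    have hSOSnn : 0 ≤ (∑ j ∈ range m,
        (Real.sin ((j+2)*θ) * b j + Real.sin ((j+1)*θ) * b (j+1))^2
          / (2 * Real.sin ((j+1)*θ) * Real.sin ((j+2)*θ))) := by
      apply Finset.sum_nonneg
      intro j hj
      simp only [mem_range] at hj
      have p1 : 0 < Real.sin ((j+1:ℕ)*θ) := hpos (j+1) (by omega) (by omega)
      have p2 : 0 < Real.sin ((j+2:ℕ)*θ) := hpos (j+2) (by omega) (by omega)
      push_cast at p1 p2
      apply div_nonneg (sq_nonneg _)
      positivity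
    have hSbnn : 0 ≤ ∑ k ∈ range (m+1), (b k)^2 :=
      Finset.sum_nonneg (fun i _ => sq_nonneg (b i))
    have hαc : Real.cos θ ≤ α := hα
    rw [ge_iff_le, hQ]
    simp only [Nat.add_sub_cancel]
    nlinarith [mul_nonneg (sub_nonneg.2 hαc) hSbnn]
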